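/- For every real β > 0, the function g(κ) = β·κ + (Real.log κ)² on (0, ∞) has a unique critical point κ* (i.e., a unique κ > 0 with β·κ + 2·Real.log κ = 0); this κ* lies in the open interval (0, 1), and g attains its strict global minimum on (0, ∞) at κ*. -/

import Mathlib

open Real Set

private lemma crucial_f_strictMono (β : ℝ) (hβ : 0 < β) :
    StrictMonoOn (fun κ : ℝ => β * κ + 2 * Real.log κ) (Set.Ioi 0) := by
  intro x hx y hy hxy
  have h1 : β * x < β * y := by nlinarith
  have h2 : Real.log x < Real.log y := Real.log_lt_log hx hxy
  simp only
  nlinarith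

theorem crucial_optimal_confidence_hard (β : ℝ) (hβ : 0 < β) :
    ∃ κs : ℝ,
      (0 < κs ∧ β * κs + 2 * Real.log κs = 0) ∧
      (∀ κ : ℝ, 0 < κ → β * κ + 2 * Real.log κ = 0 → κ = κs) ∧
      κs ∈ Set.Ioo (0 : ℝ) 1 ∧
      (∀ κ : ℝ, 0 < κ → κ ≠ κs →
        β * κs + (Real.log κs) ^ 2 < β * κ + (Real.log κ) ^ 2) := by
  set f : ℝ → ℝ := fun κ => β * κ + 2 * Real.log κ with hf
  set a : ℝ := Real.exp (-β) with ha
  have hapos : 0 < a := Real.exp_pos _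
  have ha1 : a < 1 := by
    rw [ha]
    have := Real.exp_lt_one_iff.mpr (neg_lt_zero.mpr hβ)
    exact this
  have hfa : f a < 0 := by
    have hlog : Real.log a = -β := Real.log_exp _
    have hexp : a ≤ 1 := ha1.le
    simp only [hf, hlog]
    nlinarith
  have hf1 : (0:ℝ) < f 1 := by simp [hf, hβ]
  -- continuity of f on [a,1]
  have hcont : ContinuousOn f (Set.Icc a 1) := by
    intro x hx
    have hxpos : 0 < x := lt_of_lt_of_le hapos hx.1
    exact ((continuousAt_const.mul continuousAt_id).add
      (continuousAt_const.mul (Real.continuousAt_log hxpos.ne'))).continuousWithinAt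
  have hivt := intermediate_value_Ioo (le_of_lt ha1) hcont
  have h0mem : (0:ℝ) ∈ Set.Ioo (f a) (f 1) := ⟨hfa, hf1⟩
  obtain ⟨κs, hκsmem, hκs0⟩ := hivt h0mem
  have hκspos : 0 < κs := lt_trans hapos hκsmem.1
  have hκslt1 : κs < 1 := hκsmem.2
  have hmono := crucial_f_strictMono β hβ
  have huniq : ∀ κ : ℝ, 0 < κ → f κ = 0 → κ = κs := by
    intro κ hκ hκ0
    by_contra hne
    have hκ0' : β * κ + 2 * Real.log κ = 0 := hκ0
    have hκs0' : β * κs + 2 * Real.log κs = 0 := hκs0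
    rcases lt_or_gt_of_ne hne with h | h
    · have h2 : β * κ + 2 * Real.log κ < β * κs + 2 * Real.log κs :=
        hmono (Set.mem_Ioi.mpr hκ) (Set.mem_Ioi.mpr hκspos) h
      linarith
    · have h2 : β * κs + 2 * Real.log κs < β * κ + 2 * Real.log κ :=
        hmono (Set.mem_Ioi.mpr hκspos) (Set.mem_Ioi.mpr hκ) h
      linarith
  -- the function g
  set g : ℝ → ℝ := fun κ => β * κ + (Real.log κ) ^ 2 with hg
  have hderiv : ∀ x : ℝ, 0 < x → HasDerivAt g (β + 2 * Real.log x * x⁻¹) x := by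
    intro x hx
    have h1 : HasDerivAt (fun κ : ℝ => β * κ) β x := by
      simpa using (hasDerivAt_id x).const_mul β
    have h2 : HasDerivAt (fun κ : ℝ => (Real.log κ) ^ 2) (2 * Real.log x ^ 1 * x⁻¹) x := by
      simpa using (Real.hasDerivAt_log hx.ne').fun_pow 2
    simpa [pow_one] using h1.fun_add h2
  have hderiv' : ∀ x : ℝ, 0 < x → deriv g x = β + 2 * Real.log x * x⁻¹ :=
    fun x hx => (hderiv x hx).deriv
  have hcontg : ∀ s : Set ℝ, s ⊆ Set.Ioi 0 → ContinuousOn g s := by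
    intro s hs x hx
    exact ((hderiv x (hs hx)).continuousAt).continuousWithinAt
  -- g strictly decreasing on Ioc 0 κs
  have hanti : StrictAntiOn g (Set.Ioc 0 κs) := by
    apply strictAntiOn_of_deriv_neg (convex_Ioc 0 κs)
      (hcontg _ (fun x hx => hx.1))
    intro x hx
    rw [interior_Ioc] at hx
    have hxpos : 0 < x := hx.1
    rw [hderiv' x hxpos]
    have hκs0' : β * κs + 2 * Real.log κs = 0 := hκs0
    have h2 : β * x + 2 * Real.log x < β * κs + 2 * Real.log κs :=
      hmono (Set.mem_Ioi.mpr hxpos) (Set.mem_Ioi.mpr hκspos) hx.2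
    have : β * x + 2 * Real.log x < 0 := by linarith
    have hxinv : 0 < x⁻¹ := inv_pos.mpr hxpos
    have : (β * x + 2 * Real.log x) * x⁻¹ < 0 := mul_neg_of_neg_of_pos this hxinv
    calc β + 2 * Real.log x * x⁻¹ = (β * x + 2 * Real.log x) * x⁻¹ := by
          field_simp
      _ < 0 := this
  -- g strictly increasing on Ici κs
  have hmonog : StrictMonoOn g (Set.Ici κs) := by
    apply strictMonoOn_of_deriv_pos (convex_Ici κs)
      (hcontg _ (fun x hx => lt_of_lt_of_le hκspos hx))
    intro x hx
    rw [interior_Ici] at hx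
    have hxpos : 0 < x := lt_trans hκspos hx
    rw [hderiv' x hxpos]
    have hκs0' : β * κs + 2 * Real.log κs = 0 := hκs0
    have h2 : β * κs + 2 * Real.log κs < β * x + 2 * Real.log x :=
      hmono (Set.mem_Ioi.mpr hκspos) (Set.mem_Ioi.mpr hxpos) hx
    have : 0 < β * x + 2 * Real.log x := by linarith
    have hxinv : 0 < x⁻¹ := inv_pos.mpr hxpos
    have : 0 < (β * x + 2 * Real.log x) * x⁻¹ := mul_pos this hxinv
    calc (0:ℝ) < (β * x + 2 * Real.log x) * x⁻¹ := this
      _ = β + 2 * Real.log x * x⁻¹ := by field_simp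
  refine ⟨κs, ⟨hκspos, hκs0⟩, huniq, ⟨hκspos, hκslt1⟩, ?_⟩
  intro κ hκ hne
  rcases lt_or_gt_of_ne hne with h | h
  · exact hanti ⟨hκ, h.le⟩ ⟨hκspos, le_refl _⟩ h
  · exact hmonog (Set.mem_Ici.mpr (le_refl _)) (Set.mem_Ici.mpr h.le) h
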